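/- Let K be a graph on n + m - 1 vertices obtained by 1-connecting graphs G (on n vertices) and H (on m vertices): K decomposes into induced subgraphs K_1 ≅ G on vertices {1,...,n} and K_2 ≅ H on vertices {n,...,n+m-1} sharing only vertex n, with no edges between {1,...,n-1} and {n+1,...,n+m-1}. Suppose every PSD matrix satisfying G has rank ≥ n-1 and every PSD matrix satisfying H has rank ≥ m-1 (where 'satisfying' means fitting the zero pattern and being purely imaginary on designated lossless edges). Then every PSD matrix A satisfying K has rank(A) ≥ n + m - 2. -/

import Mathlib

open Matrix Module


open ComplexOrder

/-- A Hermitian PSD matrix `A` *satisfies* a network given by an adjacency relation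
`Adj` and a designation `Lossless` of lossless edges if, for `i ≠ k`, `A i k ≠ 0`
exactly when `(i,k)` is an edge, and `A i k` is purely imaginary whenever the edge
`(i,k)` is lossless. -/
def SatisfiesNetwork {N : ℕ} (A : Matrix (Fin N) (Fin N) ℂ)
    (Adj : Fin N → Fin N → Prop) (Lossless : Fin N → Fin N → Prop) : Prop :=
  ∀ i k : Fin N, i ≠ k →
    (A i k ≠ 0 ↔ Adj i k) ∧ (Lossless i k → (A i k).re = 0)

/-- Rank bound for 1-connections. Here `K` is a network on
`n + m + 1` vertices obtained by 1-connecting a network `G` on the first `n + 1`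
vertices `{0,…,n}` and a network `H` on the last `m + 1` vertices `{n,…,n+m}`,
sharing only the vertex `n` and with no edges between `{0,…,n-1}` and
`{n+1,…,n+m}`. If every PSD matrix satisfying `G` has rank ≥ `n` (that is,
`(n+1) - 1`) and every PSD matrix satisfying `H` has rank ≥ `m`, then every PSD
matrix `A` satisfying `K` has rank ≥ `n + m` (that is, `(n+1) + (m+1) - 2`). -/

lemma gram_key {N ν : ℕ} {A : Matrix (Fin N) (Fin N) ℂ} (hA : A.PosSemidef)
    (f : Fin ν → Fin N) (j : Fin N) :
    ∃ c : Fin ν → ℂ, ∀ i, (∑ k, A (f i) (f k) * c k) = A (f i) j := by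
  obtain ⟨Z, rfl⟩ : ∃ Z : Matrix (Fin N) (Fin N) ℂ, A = Zᴴ * Z := by
    open scoped MatrixOrder Matrix.Norms.L2Operator in
    obtain ⟨Z, hZ⟩ := CStarAlgebra.nonneg_iff_eq_star_mul_self.mp hA.nonneg
    exact ⟨Z, hZ⟩
  set E := EuclideanSpace ℂ (Fin N)
  let z : Fin N → E := fun i => (WithLp.toLp 2 (fun r => Z r i) : EuclideanSpace ℂ (Fin N))
  have hzA : ∀ i k, (Zᴴ * Z) i k = inner ℂ (z i) (z k) := by
    intro i k
    simp [Matrix.mul_apply, PiLp.inner_apply, RCLike.inner_apply, z, E,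
      Matrix.conjTranspose_apply]
    exact Finset.sum_congr rfl fun _ _ => mul_comm _ _
  let U : Submodule ℂ E := Submodule.span ℂ (Set.range (z ∘ f))
  have hFD : FiniteDimensional ℂ E := by infer_instance
  let u : E := (U.orthogonalProjectionOnto (z j) : E)
  have hu : u ∈ U := Submodule.coe_mem _
  obtain ⟨c, hc⟩ := (Submodule.mem_span_range_iff_exists_fun ℂ).mp hu
  refine ⟨c, fun i => ?_⟩
  have hmemU : z (f i) ∈ U := Submodule.subset_span ⟨i, rfl⟩
  have horth : (inner ℂ (z (f i)) (z j - u) : ℂ) = 0 :=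
    (Submodule.mem_orthogonal U _).mp (Submodule.sub_starProjection_mem_orthogonal (K := U) (z j)) _ hmemU
  have h1 : (inner ℂ (z (f i)) (z j) : ℂ) = inner ℂ (z (f i)) u := by
    have := horth
    rw [inner_sub_right, sub_eq_zero] at this
    exact this
  calc ∑ k, (Zᴴ * Z) (f i) (f k) * c k
      = ∑ k, (inner ℂ (z (f i)) (c k • z (f k)) : ℂ) := by
        simp [hzA, inner_smul_right, mul_comm]
    _ = inner ℂ (z (f i)) u := by rw [← inner_sum]; exact congrArg _ hc
    _ = inner ℂ (z (f i)) (z j) := h1.symm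
    _ = (Zᴴ * Z) (f i) j := (hzA _ _).symm

lemma psd_completion {N ν : ℕ} {A : Matrix (Fin N) (Fin N) ℂ} (hA : A.PosSemidef)
    (e : Fin (ν+1) → Fin N) (s : Fin (ν+1)) :
    ∃ B : Matrix (Fin (ν+1)) (Fin (ν+1)) ℂ, B.PosSemidef ∧
      (∀ k l, k ≠ l → B k l = A (e k) (e l)) ∧
      B.rank ≤ (A.submatrix (e ∘ s.succAbove) (e ∘ s.succAbove)).rank := by
  obtain ⟨c, hc⟩ := gram_key hA (e ∘ s.succAbove) (e s)
  set P : Matrix (Fin ν) (Fin ν) ℂ := A.submatrix (e ∘ s.succAbove) (e ∘ s.succAbove) with hPdef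
  have hP : P.PosSemidef := hA.submatrix _
  set E : Matrix (Fin ν) (Fin (ν+1)) ℂ :=
    Matrix.of (fun i k => if k = s then c i else if s.succAbove i = k then 1 else 0) with hEdef
  have hBpsd : (Eᴴ * P * E).PosSemidef := hP.conjTranspose_mul_mul_same E
  have hoff : ∀ k l, k ≠ l → (Eᴴ * P * E) k l = A (e k) (e l) := by
    have main : ∀ k l : Fin (ν+1), k ≠ s → (Eᴴ * P * E) k l = A (e k) (e l) := by
      intro k l hk
      obtain ⟨i₀, hi₀⟩ := Fin.exists_succAbove_eq hk
      have hstar : ∀ i, star (E i k) = if i = i₀ then (1:ℂ) else 0 := by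
        intro i
        by_cases h : i = i₀
        · subst h; simp [hEdef, hi₀, hk]
        · have hne : s.succAbove i ≠ k := fun hh =>
            h (Fin.succAbove_right_injective (hh.trans hi₀.symm))
          simp [hEdef, hne, hk, h]
      have h1 : ∀ j, (Eᴴ * P) k j = P i₀ j := by
        intro j
        simp [Matrix.mul_apply, Matrix.conjTranspose_apply, hstar, ite_mul, one_mul,
          zero_mul, Finset.sum_ite_eq, Finset.sum_ite_eq']
      have h2 : (Eᴴ * P * E) k l = ∑ j, P i₀ j * E j l := by
        simp [Matrix.mul_apply, h1]
      by_cases hl : l = s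
      · have hE0 : ∀ j, E j l = c j := by intro j; simp [hEdef, hl]
        rw [h2]
        calc ∑ j, P i₀ j * E j l
            = ∑ j, A ((e ∘ s.succAbove) i₀) ((e ∘ s.succAbove) j) * c j := by
              simp only [hE0, hPdef, Matrix.submatrix_apply]
          _ = A ((e ∘ s.succAbove) i₀) (e s) := hc i₀
          _ = A (e k) (e l) := by rw [Function.comp_apply, hi₀, hl]
      · obtain ⟨j₀, hj₀⟩ := Fin.exists_succAbove_eq hl
        have hE' : ∀ j, E j l = if j = j₀ then (1:ℂ) else 0 := by
          intro j
          by_cases h : j = j₀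
          · subst h; simp [hEdef, hj₀, hl, Ne.symm hl]
          · have hne : s.succAbove j ≠ l := fun hh =>
              h (Fin.succAbove_right_injective (hh.trans hj₀.symm))
            simp [hEdef, hne, hl, h]
        rw [h2]
        simp only [hE', mul_ite, mul_one, mul_zero, Finset.sum_ite_eq, Finset.sum_ite_eq',
          Finset.mem_univ, if_true]
        rw [← hi₀, ← hj₀]
        simp [hPdef]
    intro k l hkl
    by_cases hk : k = s
    · have hl : l ≠ s := fun h => hkl (hk.trans h.symm)
      have hmain := main l k hl
      calc (Eᴴ * P * E) k l = star ((Eᴴ * P * E) l k) := (hBpsd.1.apply k l).symm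
        _ = star (A (e l) (e k)) := by rw [hmain]
        _ = A (e k) (e l) := hA.1.apply (e k) (e l)
    · exact main k l hk
  refine ⟨Eᴴ * P * E, hBpsd, hoff, ?_⟩
  calc (Eᴴ * P * E).rank ≤ (Eᴴ * P).rank := Matrix.rank_mul_le_left _ _
    _ ≤ P.rank := Matrix.rank_mul_le_right _ _



lemma rank_add_rank_le_rank_fromBlocks {p q : Type*} [Fintype p] [Fintype q]
    (P : Matrix p p ℂ) (Q : Matrix q q ℂ) :
    P.rank + Q.rank ≤ (fromBlocks P 0 0 Q).rank := by
  classical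
  set M : Matrix (p ⊕ q) (p ⊕ q) ℂ := fromBlocks P 0 0 Q with hM
  have hker1 : ∀ x ∈ LinearMap.ker M.mulVecLin,
      (x ∘ Sum.inl) ∈ LinearMap.ker P.mulVecLin := by
    intro x hx
    have := congrFun (LinearMap.mem_ker.mp hx)
    simp only [mulVecLin_apply, hM, fromBlocks_mulVec, zero_mulVec, add_zero, zero_add,
      Pi.zero_apply] at this
    ext i
    simpa using this (Sum.inl i)
  have hker2 : ∀ x ∈ LinearMap.ker M.mulVecLin,
      (x ∘ Sum.inr) ∈ LinearMap.ker Q.mulVecLin := by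
    intro x hx
    have := congrFun (LinearMap.mem_ker.mp hx)
    simp only [mulVecLin_apply, hM, fromBlocks_mulVec, zero_mulVec, add_zero, zero_add,
      Pi.zero_apply] at this
    ext i
    simpa using this (Sum.inr i)
  let φ : LinearMap.ker M.mulVecLin →ₗ[ℂ]
      (LinearMap.ker P.mulVecLin × LinearMap.ker Q.mulVecLin) :=
    LinearMap.prod
      (((LinearMap.funLeft ℂ ℂ Sum.inl).comp
        (LinearMap.ker M.mulVecLin).subtype).codRestrict _ (fun x => hker1 x x.2))
      (((LinearMap.funLeft ℂ ℂ Sum.inr).comp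
        (LinearMap.ker M.mulVecLin).subtype).codRestrict _ (fun x => hker2 x x.2))
  have hφinj : Function.Injective φ := by
    intro x y hxy
    ext r
    have h1 := congrArg (fun z => (z.1 : p → ℂ)) hxy
    have h2 := congrArg (fun z => (z.2 : q → ℂ)) hxy
    cases r with
    | inl i => exact congrFun h1 i
    | inr i => exact congrFun h2 i
  have hk : finrank ℂ (LinearMap.ker M.mulVecLin) ≤
      finrank ℂ (LinearMap.ker P.mulVecLin) + finrank ℂ (LinearMap.ker Q.mulVecLin) := by
    have := LinearMap.finrank_le_finrank_of_injective hφinj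
    rwa [finrank_prod] at this
  have hP := LinearMap.finrank_range_add_finrank_ker P.mulVecLin
  have hQ := LinearMap.finrank_range_add_finrank_ker Q.mulVecLin
  have hMrn := LinearMap.finrank_range_add_finrank_ker M.mulVecLin
  rw [finrank_pi] at hP hQ hMrn
  rw [Fintype.card_sum] at hMrn
  have : P.rank = finrank ℂ (LinearMap.range P.mulVecLin) := rfl
  rw [Matrix.rank, Matrix.rank, Matrix.rank]
  omega


lemma rank_submatrix_le'' {ι κ : Type*} [Fintype ι] [Fintype κ] [DecidableEq ι]
    (A : Matrix ι ι ℂ) (g : κ → ι) : (A.submatrix g g).rank ≤ A.rank := by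
  have hfac : A.submatrix g g =
      (Matrix.of fun k r => if g k = r then (1:ℂ) else 0) * A *
      (Matrix.of fun r k => if r = g k then (1:ℂ) else 0) := by
    ext k l
    simp [Matrix.mul_apply, ite_mul, zero_mul, mul_ite, mul_zero, Finset.sum_ite_eq,
      Finset.sum_ite_eq']
  calc (A.submatrix g g).rank ≤ ((Matrix.of fun k r => if g k = r then (1:ℂ) else 0) * A).rank :=
        hfac ▸ Matrix.rank_mul_le_left _ _
    _ ≤ A.rank := Matrix.rank_mul_le_right _ _


theorem rank_ge_of_one_connection
    (n m : ℕ)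
    (Adj Lossless : Fin (n + m + 1) → Fin (n + m + 1) → Prop)
    (hAdjSymm : ∀ i k, Adj i k → Adj k i)
    (hAdjIrrefl : ∀ i, ¬ Adj i i)
    (hsplit : ∀ i k : Fin (n + m + 1), i.val < n → n < k.val → ¬ Adj i k)
    (eG : Fin (n + 1) → Fin (n + m + 1)) (heG : ∀ i, (eG i).val = i.val)
    (eH : Fin (m + 1) → Fin (n + m + 1)) (heH : ∀ j, (eH j).val = n + j.val)
    (hG : ∀ B : Matrix (Fin (n + 1)) (Fin (n + 1)) ℂ, B.PosSemidef →
      SatisfiesNetwork B (fun i k => Adj (eG i) (eG k))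
        (fun i k => Lossless (eG i) (eG k)) → n ≤ B.rank)
    (hH : ∀ B : Matrix (Fin (m + 1)) (Fin (m + 1)) ℂ, B.PosSemidef →
      SatisfiesNetwork B (fun i k => Adj (eH i) (eH k))
        (fun i k => Lossless (eH i) (eH k)) → m ≤ B.rank)
    (A : Matrix (Fin (n + m + 1)) (Fin (n + m + 1)) ℂ)
    (hApsd : A.PosSemidef)
    (hAsat : SatisfiesNetwork A Adj Lossless) :
    n + m ≤ A.rank := by
  classical
  have heGinj : Function.Injective eG := fun a b h =>
    Fin.ext (by rw [← heG a, ← heG b, h])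
  have heHinj : Function.Injective eH := fun a b h => by
    apply Fin.ext
    have := congrArg Fin.val h
    rw [heH a, heH b] at this
    omega
  obtain ⟨BG, hBGpsd, hBGoff, hBGrank⟩ := psd_completion hApsd eG (Fin.last n)
  obtain ⟨BH, hBHpsd, hBHoff, hBHrank⟩ := psd_completion hApsd eH 0
  have hnG : n ≤ BG.rank := hG BG hBGpsd (fun i k hik => by
    rw [hBGoff i k hik]; exact hAsat (eG i) (eG k) (fun h => hik (heGinj h)))
  have hmH : m ≤ BH.rank := hH BH hBHpsd (fun i k hik => by
    rw [hBHoff i k hik]; exact hAsat (eH i) (eH k) (fun h => hik (heHinj h)))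
  set fG : Fin n → Fin (n + m + 1) := eG ∘ (Fin.last n).succAbove with hfG
  set fH : Fin m → Fin (n + m + 1) := eH ∘ (0 : Fin (m+1)).succAbove with hfH
  have hv1 : ∀ i : Fin n, (fG i).val = i.val := by
    intro i
    rw [hfG, Function.comp_apply, heG, Fin.succAbove_last, Fin.coe_castSucc]
  have hv2 : ∀ j : Fin m, (fH j).val = n + j.val + 1 := by
    intro j
    rw [hfH, Function.comp_apply, heH, Fin.succAbove_zero, Fin.val_succ]; omega
  have hzero : ∀ (i : Fin n) (j : Fin m), A (fG i) (fH j) = 0 := by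
    intro i j
    have h1 := hv1 i
    have h2 := hv2 j
    have hne : fG i ≠ fH j := fun h => by rw [h] at h1; omega
    have hnadj : ¬ Adj (fG i) (fH j) :=
      hsplit _ _ (by omega) (by omega)
    by_contra h
    exact hnadj ((hAsat _ _ hne).1.mp h)
  have hblock : A.submatrix (Sum.elim fG fH) (Sum.elim fG fH) =
      fromBlocks (A.submatrix fG fG) 0 0 (A.submatrix fH fH) := by
    ext k l
    cases k with
    | inl i =>
      cases l with
      | inl i' => rfl
      | inr j => simpa using hzero i j
    | inr j =>
      cases l with
      | inl i =>
        have : A (fH j) (fG i) = star (A (fG i) (fH j)) := (hApsd.1.apply (fH j) (fG i)).symm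
        simp [this, hzero i j]
      | inr j' => rfl
  calc n + m ≤ (A.submatrix fG fG).rank + (A.submatrix fH fH).rank :=
        add_le_add (le_trans hnG hBGrank) (le_trans hmH hBHrank)
    _ ≤ (fromBlocks (A.submatrix fG fG) 0 0 (A.submatrix fH fH)).rank :=
        rank_add_rank_le_rank_fromBlocks _ _
    _ = (A.submatrix (Sum.elim fG fH) (Sum.elim fG fH)).rank := by rw [hblock]
    _ ≤ A.rank := rank_submatrix_le'' A _
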